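/- Let $R$ be a local ring with maximal ideal $\mathfrak{m}$, $A$ an $R$-algebra that is a domain, $J$ an ideal of $R$ satisfying the cancellation property (if $g\zeta \in J\cdot A$ and $g \notin \mathfrak{m}A$ then $\zeta \in J\cdot A$). Suppose $\Phi = \begin{bmatrix}\alpha & \beta\\ \gamma & \delta\end{bmatrix}$ is a $q\times p$ matrix over $A$ with $\alpha$ of size $r\times r$ and $\det\alpha \notin \mathfrak{m}A$. If all entries of $(\det\alpha)\cdot\delta - \gamma\,\alpha^{\#}\beta$ lie in $J\cdot A$, then every $(r+1)\times(r+1)$ minor of $\Phi$ lies in $J\cdot A$. -/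

import Mathlib

open Matrix IsLocalRing

lemma det_rect_mul_zero {A : Type*} [CommRing A] {m n : Type*} [Fintype m] [Fintype n]
    [DecidableEq m] [DecidableEq n] (h : Fintype.card n < Fintype.card m)
    (B : Matrix m n A) (T : Matrix n m A) : (B * T).det = 0 := by
  have hrows : (B * T).det =
      (Matrix.detRowAlternating : (m → A) [⋀^m]→ₗ[A] A).toMultilinearMap
        (fun i => ∑ k : n, B i k • T k) := by
    congr 1
    ext i j
    simp [Matrix.mul_apply, Finset.sum_apply]
  rw [hrows, MultilinearMap.map_sum]
  apply Finset.sum_eq_zero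
  intro f _
  have hf : ¬ Function.Injective f := by
    intro hinj
    exact absurd (Fintype.card_le_of_injective f hinj) (not_le.2 h)
  obtain ⟨i, j, heq, hne⟩ := Function.not_injective_iff.mp hf
  rw [MultilinearMap.map_smul_univ]
  have : (Matrix.detRowAlternating : (m → A) [⋀^m]→ₗ[A] A) (fun i => T (f i)) = 0 :=
    AlternatingMap.map_eq_zero_of_eq _ _ (by rw [heq]) hne
  simp only [AlternatingMap.coe_multilinearMap] at *
  rw [this, smul_zero]

/-- If `A` is a domain over a local ring `R`, the cancellation property holds for `J`,
`det α ∉ 𝔪A`, and all entries of `(det α)·δ - γ·α#·β` lie in `J·A`, then every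
`(r+1) × (r+1)` minor of `Φ = [[α,β],[γ,δ]]` lies in `J·A`. -/
theorem stmt7 {R : Type*} [CommRing R] [IsLocalRing R] (J : Ideal R)
    {A : Type*} [CommRing A] [IsDomain A] [Algebra R A]
    {r s t : ℕ}
    (α : Matrix (Fin r) (Fin r) A) (β : Matrix (Fin r) (Fin t) A)
    (γ : Matrix (Fin s) (Fin r) A) (δ : Matrix (Fin s) (Fin t) A)
    (hcancel : ∀ g ζ : A, g ∉ Ideal.map (algebraMap R A) (maximalIdeal R) →
      g * ζ ∈ Ideal.map (algebraMap R A) J → ζ ∈ Ideal.map (algebraMap R A) J)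
    (hg : α.det ∉ Ideal.map (algebraMap R A) (maximalIdeal R))
    (hJA : ∀ i j, (α.det • δ - γ * α.adjugate * β) i j ∈ Ideal.map (algebraMap R A) J) :
    ∀ (rows : Fin (r + 1) → Fin r ⊕ Fin s) (cols : Fin (r + 1) → Fin r ⊕ Fin t),
      ((fromBlocks α β γ δ).submatrix rows cols).det ∈ Ideal.map (algebraMap R A) J := by
  intro rows cols
  set I : Ideal A := Ideal.map (algebraMap R A) J with hI
  set g : A := α.det with hgdef
  set P : Matrix (Fin r ⊕ Fin s) (Fin r ⊕ Fin t) A := fromBlocks α β γ δ with hP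
  set M : Matrix (Fin (r+1)) (Fin (r+1)) A := P.submatrix rows cols with hM
  -- auxiliary matrices
  set T : Matrix (Fin r) (Fin (r+1)) A := fun k j => P (Sum.inl k) (cols j) with hT
  set B : Matrix (Fin (r+1)) (Fin r) A := fun i k =>
    Sum.elim (fun a => if k = a then g else 0) (fun b => (γ * α.adjugate) b k) (rows i) with hB
  set F : Matrix (Fin (r+1)) (Fin (r+1)) A := fun i j =>
    Sum.elim (fun _ => (0:A))
      (fun b => Sum.elim (fun _ => (0:A)) (fun c => (g • δ - γ * α.adjugate * β) b c) (cols j))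
      (rows i) with hF
  have hγαα : γ * α.adjugate * α = g • γ := by
    rw [Matrix.mul_assoc, Matrix.adjugate_mul, Matrix.mul_smul, Matrix.mul_one]
  have hkey : g • M = B * T + F := by
    ext i j
    rcases hri : rows i with a | b
    · -- top row
      rw [Matrix.add_apply, Matrix.mul_apply]
      simp only [Matrix.add_apply, Matrix.mul_apply, hB, hF, hri, Sum.elim_inl,
        Matrix.smul_apply, hM, Matrix.submatrix_apply, smul_eq_mul, ite_mul, zero_mul]
      rw [Finset.sum_ite_eq' Finset.univ a (fun k => g * T k j)]
      simp [hT]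
    · -- bottom row
      rcases hcj : cols j with c | c
      · rw [Matrix.add_apply, Matrix.mul_apply]
        simp only [Matrix.add_apply, Matrix.mul_apply, hB, hF, hri, hcj, Sum.elim_inr,
          Sum.elim_inl, Matrix.smul_apply, hM, Matrix.submatrix_apply, smul_eq_mul, add_zero]
        have := congrFun (congrFun hγαα b) c
        simp only [Matrix.mul_apply, Matrix.smul_apply, smul_eq_mul] at this
        simp [hP, hT, hcj, fromBlocks_apply₂₁, fromBlocks_apply₁₁, this]
      · rw [Matrix.add_apply, Matrix.mul_apply]
        simp only [Matrix.add_apply, Matrix.mul_apply, hB, hF, hri, hcj, Sum.elim_inr,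
          Matrix.smul_apply, hM, Matrix.submatrix_apply, smul_eq_mul]
        have h2 : ∑ x, (∑ j, γ b j * α.adjugate j x) * β x c = (γ * α.adjugate * β) b c := by
          simp [Matrix.mul_apply]
        simp only [hP, hT, hcj, fromBlocks_apply₂₂, fromBlocks_apply₁₂]
        rw [h2]
        simp only [Matrix.sub_apply, Matrix.smul_apply, smul_eq_mul, hgdef]
        ring
  -- the determinant of B * T + F lies in I
  have hmem : (B * T + F).det ∈ I := by
    rw [← Ideal.Quotient.eq_zero_iff_mem]
    let π : A →+* A ⧸ I := Ideal.Quotient.mk I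
    rw [show (Ideal.Quotient.mk I) (B * T + F).det = π (B * T + F).det from rfl,
      RingHom.map_det, RingHom.mapMatrix_apply]
    have hFzero : F.map π = 0 := by
      ext i j
      simp only [Matrix.map_apply, Matrix.zero_apply]
      rw [Ideal.Quotient.eq_zero_iff_mem]
      rcases hri : rows i with a | b
      · simp [hF, hri]
      · rcases hcj : cols j with c | c
        · simp [hF, hri, hcj]
        · simpa [hF, hri, hcj] using hJA b c
    rw [Matrix.map_add _ (fun a b => map_add π a b), Matrix.map_mul, hFzero, add_zero]
    exact det_rect_mul_zero (by simp) _ _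
  have hpow : g ^ (r + 1) * M.det ∈ I := by
    rw [show g ^ (r + 1) * M.det = (g • M).det by rw [Matrix.det_smul, Fintype.card_fin], hkey]
    exact hmem
  -- cancellation by induction on the power
  have hcanc : ∀ n (ζ : A), g ^ n * ζ ∈ I → ζ ∈ I := by
    intro n
    induction n with
    | zero => intro ζ h; simpa using h
    | succ n ih =>
      intro ζ h
      refine ih ζ (hcancel g (g ^ n * ζ) hg ?_)
      rw [show g * (g ^ n * ζ) = g ^ (n + 1) * ζ by ring]
      exact h
  exact hcanc (r + 1) M.det hpow
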